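/- For the sparsity set S = {x ∈ ℝⁿ : ‖x‖₀ ≤ s} with s < n and any x* ∈ S, there exists δ > 0 such that the limiting normal cone of S at x* equals the union of the Fréchet normal cones of S over points in the ball of radius δ around x*: N_S(x*) = ⋃_{x ∈ B_δ(x*) ∩ S} N̂_S(x). -/

import Mathlib

open Filter Topology Metric Set
open scoped Classical

noncomputable section

abbrev E (n : ℕ) := EuclideanSpace ℝ (Fin n)

/-- Bouligand tangent cone. -/
def bouligand {n : ℕ} (S : Set (E n)) (x : E n) : Set (E n) :=
  {d | ∃ t : ℕ → ℝ, ∃ dk : ℕ → E n,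
    (∀ k, 0 < t k) ∧ Tendsto t atTop (𝓝 0) ∧ Tendsto dk atTop (𝓝 d) ∧
    ∀ k, x + t k • dk k ∈ S}

/-- Fréchet (regular) normal cone. -/
def frechetNormal {n : ℕ} (S : Set (E n)) (x : E n) : Set (E n) :=
  {v | ∀ ε > (0 : ℝ), ∃ δ > (0 : ℝ), ∀ y ∈ S, ‖y - x‖ < δ →
    (inner ℝ v (y - x) : ℝ) ≤ ε * ‖y - x‖}

/-- Mordukhovich (limiting) normal cone. -/
def limitingNormal {n : ℕ} (S : Set (E n)) (x : E n) : Set (E n) :=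
  {v | ∃ xk : ℕ → E n, ∃ vk : ℕ → E n,
    (∀ k, xk k ∈ S) ∧ Tendsto xk atTop (𝓝 x) ∧
    (∀ k, vk k ∈ frechetNormal S (xk k)) ∧ Tendsto vk atTop (𝓝 v)}

/-- Directional limiting normal cone. -/
def dirLimitingNormal {n : ℕ} (S : Set (E n)) (x d : E n) : Set (E n) :=
  {v | ∃ t : ℕ → ℝ, ∃ dk : ℕ → E n, ∃ vk : ℕ → E n,
    (∀ k, 0 < t k) ∧ Tendsto t atTop (𝓝 0) ∧ Tendsto dk atTop (𝓝 d) ∧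
    Tendsto vk atTop (𝓝 v) ∧ ∀ k, vk k ∈ frechetNormal S (x + t k • dk k)}

/-- Support of a vector. -/
def supp {n : ℕ} (x : E n) : Finset (Fin n) := Finset.univ.filter (fun i => x i ≠ 0)

/-- The ℓ₀ "norm": number of nonzero components. -/
def l0 {n : ℕ} (x : E n) : ℕ := (supp x).card

/-- The sparsity set {x : ‖x‖₀ ≤ s}. -/
def sparseSet (n s : ℕ) : Set (E n) := {x | l0 x ≤ s}

/-- Coordinate subspace ℝ_I of vectors supported on I. -/
def coordSub {n : ℕ} (I : Finset (Fin n)) : Set (E n) := {x | ∀ i ∉ I, x i = 0}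

lemma mem_supp {n : ℕ} {y : E n} {i : Fin n} : i ∈ supp y ↔ y i ≠ 0 := by simp [supp]

lemma abs_coord_le {n : ℕ} (w : E n) (i : Fin n) : |w i| ≤ ‖w‖ := by
  rw [EuclideanSpace.norm_eq, ← Real.sqrt_sq_eq_abs]
  apply Real.sqrt_le_sqrt
  simp only [Real.norm_eq_abs, sq_abs]
  exact Finset.single_le_sum (f := fun j => (w j)^2) (fun j _ => sq_nonneg _)
    (Finset.mem_univ i)

lemma inner_eq {n : ℕ} (v w : E n) : (inner ℝ v w : ℝ) = ∑ i, v i * w i := by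
  simp [PiLp.inner_apply, RCLike.inner_apply, mul_comm]

lemma inner_single {n : ℕ} (v : E n) (i : Fin n) :
    (inner ℝ v (EuclideanSpace.single i (1:ℝ)) : ℝ) = v i := by
  rw [inner_eq]; simp [EuclideanSpace.single_apply]

lemma zero_mem_frechet {n : ℕ} (S : Set (E n)) (y : E n) :
    (0 : E n) ∈ frechetNormal S y := by
  intro ε hε
  exact ⟨1, one_pos, fun z _ _ => by
    rw [inner_zero_left]; positivity⟩

lemma pert_small {n s : ℕ} {y : E n} (hy : y ∈ sparseSet n s) {i : Fin n} (hi : y i ≠ 0) :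
    ∀ t : ℝ, y + t • EuclideanSpace.single i 1 ∈ sparseSet n s := by
  intro t
  refine le_trans (Finset.card_le_card ?_) hy
  intro j hj
  rw [mem_supp] at hj ⊢
  by_cases hji : j = i
  · subst hji; exact hi
  · simpa [PiLp.add_apply, PiLp.smul_apply, EuclideanSpace.single_apply, hji] using hj

lemma pert_any {n s : ℕ} {y : E n} (hy : l0 y < s) (i : Fin n) :
    ∀ t : ℝ, y + t • EuclideanSpace.single i 1 ∈ sparseSet n s := by
  intro t
  have hsub : supp (y + t • EuclideanSpace.single i 1) ⊆ insert i (supp y) := by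
    intro j hj
    rw [mem_supp] at hj
    by_cases hji : j = i
    · exact hji ▸ Finset.mem_insert_self _ _
    · refine Finset.mem_insert_of_mem (mem_supp.2 ?_)
      simpa [PiLp.add_apply, PiLp.smul_apply, EuclideanSpace.single_apply, hji] using hj
  calc l0 (y + t • EuclideanSpace.single i 1) ≤ (insert i (supp y)).card :=
        Finset.card_le_card hsub
    _ ≤ (supp y).card + 1 := Finset.card_insert_le _ _
    _ ≤ s := hy

lemma frechet_coord_zero {n s : ℕ} {y v : E n}
    (hv : v ∈ frechetNormal (sparseSet n s) y) (i : Fin n)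
    (hpert : ∀ t : ℝ, |t| ≤ 1 → y + t • EuclideanSpace.single i 1 ∈ sparseSet n s) :
    v i = 0 := by
  by_contra h
  have habs : 0 < |v i| := abs_pos.2 h
  obtain ⟨δ, hδ, hδ'⟩ := hv (|v i| / 2) (by positivity)
  set r := min 1 (δ / 2) with hrdef
  have hr0 : 0 < r := lt_min one_pos (by linarith)
  set t : ℝ := if 0 ≤ v i then r else -r with htdef
  have hts : |t| = r := by
    rw [htdef]; split <;> simp [abs_of_nonneg hr0.le]
  set z := y + t • EuclideanSpace.single i (1:ℝ) with hzdef
  have hz : z ∈ sparseSet n s := hpert t (by rw [hts]; exact min_le_left _ _)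
  have hzy : z - y = t • EuclideanSpace.single i (1:ℝ) := by
    rw [hzdef]; abel
  have hnorm : ‖z - y‖ = r := by
    rw [hzy, norm_smul, EuclideanSpace.norm_single]
    simp [Real.norm_eq_abs, hts]
  have hlt : ‖z - y‖ < δ := by
    rw [hnorm]; calc r ≤ δ / 2 := min_le_right _ _
      _ < δ := by linarith
  have hle := hδ' z hz hlt
  have hinner : (inner ℝ v (z - y) : ℝ) = r * |v i| := by
    rw [hzy, real_inner_smul_right, inner_single, htdef]
    split
    · rw [abs_of_nonneg (by assumption)]
    · push_neg at *; rw [abs_of_neg (by assumption)]; ring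
  rw [hinner, hnorm] at hle
  nlinarith

lemma mem_frechet_of {n s : ℕ} {y v : E n} (hy : l0 y = s)
    (hvy : ∀ i ∈ supp y, v i = 0) : v ∈ frechetNormal (sparseSet n s) y := by
  intro ε hε
  set T : Finset ℝ := insert (1:ℝ) ((supp y).image fun i => |y i|) with hT
  have hTne : T.Nonempty := ⟨1, Finset.mem_insert_self _ _⟩
  set δ₀ := T.min' hTne with hδ₀
  have hδ₀pos : 0 < δ₀ := by
    rw [hδ₀, Finset.lt_min'_iff]
    intro b hb
    rcases Finset.mem_insert.1 hb with hb | hb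
    · rw [hb]; exact one_pos
    · obtain ⟨i, hi, rfl⟩ := Finset.mem_image.1 hb
      exact abs_pos.2 (mem_supp.1 hi)
  have hδ₀le : ∀ i ∈ supp y, δ₀ ≤ |y i| := fun i hi =>
    Finset.min'_le _ _ (Finset.mem_insert_of_mem (Finset.mem_image_of_mem _ hi))
  refine ⟨δ₀, hδ₀pos, fun z hz hlt => ?_⟩
  have hsub : supp y ⊆ supp z := by
    intro i hi
    rw [mem_supp]
    intro hzi
    have h1 : |z i - y i| ≤ ‖z - y‖ := by
      simpa [PiLp.sub_apply] using abs_coord_le (z - y) i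
    have h2 : |z i - y i| = |y i| := by rw [hzi]; simp
    have := hδ₀le i hi
    linarith
  have hsupp_eq : supp z = supp y :=
    (Finset.eq_of_subset_of_card_le hsub (le_trans hz (le_of_eq hy.symm))).symm
  have hzero : (inner ℝ v (z - y) : ℝ) = 0 := by
    rw [inner_eq]
    apply Finset.sum_eq_zero
    intro j _
    by_cases hj : j ∈ supp y
    · rw [hvy j hj]; ring
    · have hzj : z j = 0 := by
        by_contra hc; exact hj (hsupp_eq ▸ mem_supp.2 hc)
      have hyj : y j = 0 := by
        by_contra hc; exact hj (mem_supp.2 hc)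
      simp [PiLp.sub_apply, hzj, hyj]
  rw [hzero]; positivity


theorem stmt15 {n s : ℕ} (hs : s < n) (x : E n) (hx : x ∈ sparseSet n s) :
    ∃ δ > (0 : ℝ),
      limitingNormal (sparseSet n s) x
        = ⋃ y ∈ Metric.ball x δ ∩ sparseSet n s, frechetNormal (sparseSet n s) y := by
  classical
  set T : Finset ℝ := insert (1:ℝ) ((supp x).image fun i => |x i|) with hT
  have hTne : T.Nonempty := ⟨1, Finset.mem_insert_self _ _⟩
  set δ := T.min' hTne with hδdef
  have hδpos : 0 < δ := by
    rw [hδdef, Finset.lt_min'_iff]; intro b hb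
    rcases Finset.mem_insert.1 hb with hb | hb
    · rw [hb]; exact one_pos
    · obtain ⟨i, hi, rfl⟩ := Finset.mem_image.1 hb
      exact abs_pos.2 (mem_supp.1 hi)
  have hδle : ∀ i ∈ supp x, δ ≤ |x i| := fun i hi =>
    Finset.min'_le _ _ (Finset.mem_insert_of_mem (Finset.mem_image_of_mem _ hi))
  refine ⟨δ, hδpos, ?_⟩
  ext v
  simp only [Set.mem_iUnion, Set.mem_inter_iff, exists_prop, Metric.mem_ball]
  constructor
  · rintro ⟨xk, vk, hxkS, hxk, hvk, hv⟩
    by_cases hv0 : v = 0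
    · exact ⟨x, ⟨by simpa [dist_self] using hδpos, hx⟩, hv0 ▸ zero_mem_frechet _ _⟩
    · obtain ⟨i0, hi0⟩ : ∃ i, v i ≠ 0 := by
        by_contra hc; push_neg at hc; exact hv0 (by ext i; exact hc i)
      have h1 : ∀ᶠ k in atTop, dist (xk k) x < δ := by
        have := hxk (Metric.ball_mem_nhds x hδpos)
        exact this
      have h2 : ∀ᶠ k in atTop, ∀ i ∈ supp v, vk k i ≠ 0 := by
        rw [Filter.eventually_all_finset]
        intro i hi
        have hcoord : Tendsto (fun k => vk k i) atTop (𝓝 (v i)) :=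
          ((EuclideanSpace.proj i).continuous.tendsto v).comp hv
        exact hcoord.eventually_ne (mem_supp.1 hi)
      obtain ⟨k, hk1, hk2⟩ := (h1.and h2).exists
      have hvkne : vk k i0 ≠ 0 := hk2 i0 (mem_supp.2 hi0)
      have hfull : l0 (xk k) = s := by
        rcases lt_or_eq_of_le (show l0 (xk k) ≤ s from hxkS k) with hlt | heq
        · exact absurd (frechet_coord_zero (hvk k) i0 (fun t _ => pert_any hlt i0 t)) hvkne
        · exact heq
      have hvz : ∀ i ∈ supp (xk k), v i = 0 := by
        intro i hi
        by_contra h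
        exact hk2 i (mem_supp.2 h)
          (frechet_coord_zero (hvk k) i (fun t _ => pert_small (hxkS k) (mem_supp.1 hi) t))
      exact ⟨xk k, ⟨hk1, hxkS k⟩, mem_frechet_of hfull hvz⟩
  · rintro ⟨y, ⟨hyb, hyS⟩, hvF⟩
    rcases lt_or_eq_of_le (show l0 y ≤ s from hyS) with hylt | hyeq
    · have hv0 : v = 0 := by
        ext i
        exact frechet_coord_zero hvF i (fun t _ => pert_any hylt i t)
      exact ⟨fun _ => x, fun _ => 0, fun _ => hx, tendsto_const_nhds,
        fun _ => zero_mem_frechet _ _, by rw [hv0]; exact tendsto_const_nhds⟩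
    · have hvzero : ∀ i ∈ supp y, v i = 0 := fun i hi =>
        frechet_coord_zero hvF i (fun t _ => pert_small hyS (mem_supp.1 hi) t)
      have hyx : ‖y - x‖ < δ := by rw [← dist_eq_norm]; exact hyb
      have hxy : supp x ⊆ supp y := by
        intro i hi
        rw [mem_supp]
        intro h0
        have h1 : |y i - x i| ≤ ‖y - x‖ := by
          simpa [PiLp.sub_apply] using abs_coord_le (y - x) i
        have h2 : |y i - x i| = |x i| := by rw [h0]; simp
        have := hδle i hi
        linarith
      set t : ℕ → ℝ := fun k => ((k:ℝ)+1)⁻¹ with htdef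
      have ht0 : ∀ k, 0 < t k := fun k => by positivity
      have ht1 : ∀ k, t k ≤ 1 := fun k => by
        rw [htdef]
        rw [inv_le_one_iff₀]; right; linarith [Nat.cast_nonneg (α := ℝ) k]
      set xk : ℕ → E n := fun k => x + t k • (y - x) with hxkdef
      have happ : ∀ k i, xk k i = x i + t k * (y i - x i) := by
        intro k i
        simp [hxkdef, PiLp.add_apply, PiLp.smul_apply, PiLp.sub_apply, smul_eq_mul]
      have hsupp : ∀ k, supp (xk k) = supp y := by
        intro k
        ext i
        rw [mem_supp, mem_supp]
        constructor
        · intro h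
          by_contra hyi
          have hxi : x i = 0 := by
            by_contra hxi
            exact mem_supp.1 (hxy (mem_supp.2 hxi)) hyi
          exact h (by rw [happ, hxi, hyi]; ring)
        · intro hyi
          by_cases hxi : x i = 0
          · rw [happ, hxi]
            simpa using mul_ne_zero (ne_of_gt (ht0 k)) hyi
          · have hb : |y i - x i| ≤ ‖y - x‖ := by
              simpa [PiLp.sub_apply] using abs_coord_le (y - x) i
            have hsm : |t k * (y i - x i)| < |x i| := by
              rw [abs_mul, abs_of_pos (ht0 k)]
              calc t k * |y i - x i| ≤ 1 * |y i - x i| :=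
                    mul_le_mul_of_nonneg_right (ht1 k) (abs_nonneg _)
                _ = |y i - x i| := one_mul _
                _ < |x i| :=
                    lt_of_le_of_lt hb (lt_of_lt_of_le hyx (hδle i (mem_supp.2 hxi)))
            rw [happ]
            intro hcontra
            have hneg : -(x i) = t k * (y i - x i) := by linarith
            have heq2 : |x i| = |t k * (y i - x i)| := by
              rw [← hneg, abs_neg]
            linarith
      have hS : ∀ k, xk k ∈ sparseSet n s := fun k => by
        show l0 (xk k) ≤ s
        rw [l0, hsupp k]
        exact le_of_eq hyeq
      have hxk_tendsto : Tendsto xk atTop (𝓝 x) := by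
        have h0 : Tendsto t atTop (𝓝 0) := by
          rw [htdef]
          simpa [one_div] using tendsto_one_div_add_atTop_nhds_zero_nat (𝕜 := ℝ)
        have hconst : Tendsto (fun _ : ℕ => x) atTop (𝓝 x) := tendsto_const_nhds
        have := hconst.add (h0.smul_const (y - x))
        simpa using this
      refine ⟨xk, fun _ => v, hS, hxk_tendsto, fun k => ?_, tendsto_const_nhds⟩
      apply mem_frechet_of
      · show l0 (xk k) = s
        rw [l0, hsupp k]; exact hyeq
      · intro i hi
        exact hvzero i (hsupp k ▸ hi)
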